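/- arXiv:1702.00745 — 2 statements merged into one kernel-verified Lean document; each statement's English description precedes it below -/
import Mathlib

section
/- Let D ⊂ ℝ^d be open, v ∈ C²(D), and let a, n, k, α, β be real numbers. Define L v := aΔv + k²n v and M v := x·∇v − i k β v + α v. Then the pointwise identity 2 Re( conj(M v) · L v ) = div( 2 Re( conj(M v) a ∇v ) + x (k²n|v|² − a|∇v|²) ) − (2α − d + 2) a |∇v|² − (d − 2α) n k² |v|² holds in D. -/
noncomputable section

/-- `j`-th partial derivative of a complex-valued function on `ℝ^d`. -/
def pd {d : ℕ} (v : EuclideanSpace ℝ (Fin d) → ℂ) (j : Fin d)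
    (x : EuclideanSpace ℝ (Fin d)) : ℂ :=
  fderiv ℝ v x (EuclideanSpace.single j 1)

/-- Laplacian as the sum of the second partial derivatives. -/
def lap {d : ℕ} (v : EuclideanSpace ℝ (Fin d) → ℂ)
    (x : EuclideanSpace ℝ (Fin d)) : ℂ :=
  ∑ j : Fin d, pd (pd v j) j x

/-- `|∇v|² = Σ_j |∂_j v|²`. -/
def gradNormSq {d : ℕ} (v : EuclideanSpace ℝ (Fin d) → ℂ)
    (x : EuclideanSpace ℝ (Fin d)) : ℝ :=
  ∑ j : Fin d, ‖pd v j x‖ ^ 2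

/-- `x·∇v`. -/
def xdot {d : ℕ} (v : EuclideanSpace ℝ (Fin d) → ℂ)
    (x : EuclideanSpace ℝ (Fin d)) : ℂ :=
  ∑ j : Fin d, (x j : ℂ) * pd v j x

section helpers
variable {E : Type*} [NormedAddCommGroup E] [NormedSpace ℝ E] {f g : E → ℂ} {x u : E}

lemma dmul (hf : DifferentiableAt ℝ f x) (hg : DifferentiableAt ℝ g x) :
    fderiv ℝ (fun y => f y * g y) x u = fderiv ℝ f x u * g x + f x * fderiv ℝ g x u := by
  rw [fderiv_fun_mul hf hg]
  simp [add_comm, mul_comm]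

lemma diff_conj (hf : DifferentiableAt ℝ f x) :
    DifferentiableAt ℝ (fun y => (starRingEnd ℂ) (f y)) x :=
  (Complex.conjCLE.differentiable.differentiableAt).comp x hf

lemma dconj (hf : DifferentiableAt ℝ f x) :
    fderiv ℝ (fun y => (starRingEnd ℂ) (f y)) x u = (starRingEnd ℂ) (fderiv ℝ f x u) := by
  have h := (Complex.conjCLE.toContinuousLinearMap.hasFDerivAt.comp x hf.hasFDerivAt).fderiv
  have he : (fun y => (starRingEnd ℂ) (f y)) = Complex.conjCLE.toContinuousLinearMap ∘ f := rfl
  rw [he, h]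
  simp

lemma diff_re (hf : DifferentiableAt ℝ f x) :
    DifferentiableAt ℝ (fun y => (f y).re) x :=
  (Complex.reCLM.differentiable.differentiableAt).comp x hf

lemma dre (hf : DifferentiableAt ℝ f x) :
    fderiv ℝ (fun y => (f y).re) x u = (fderiv ℝ f x u).re := by
  have h := (Complex.reCLM.hasFDerivAt.comp x hf.hasFDerivAt).fderiv
  have he : (fun y => (f y).re) = Complex.reCLM ∘ f := rfl
  rw [he, h]
  simp

lemma normSq_eq_re (z : ℂ) : ‖z‖ ^ 2 = ((starRingEnd ℂ) z * z).re := by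
  rw [Complex.conj_mul']
  simp [← Complex.sq_norm, ← Complex.ofReal_pow]

lemma dnormSq (hf : DifferentiableAt ℝ f x) :
    fderiv ℝ (fun y => ‖f y‖ ^ 2) x u
      = 2 * ((starRingEnd ℂ) (f x) * fderiv ℝ f x u).re := by
  have hfe : (fun y => ‖f y‖ ^ 2) = fun y => ((starRingEnd ℂ) (f y) * f y).re := by
    funext y; exact normSq_eq_re _
  rw [hfe, dre ((diff_conj hf).fun_mul hf), dmul (diff_conj hf) hf, dconj hf]
  have : ((starRingEnd ℂ) (fderiv ℝ f x u) * f x).re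
      = ((starRingEnd ℂ) (f x) * fderiv ℝ f x u).re := by
    simp [Complex.mul_re]; ring
  simp [Complex.add_re, this]; ring

lemma diff_normSq (hf : DifferentiableAt ℝ f x) :
    DifferentiableAt ℝ (fun y => ‖f y‖ ^ 2) x := by
  have hfe : (fun y => ‖f y‖ ^ 2) = fun y => ((starRingEnd ℂ) (f y) * f y).re := by
    funext y; exact normSq_eq_re _
  rw [hfe]; exact diff_re ((diff_conj hf).mul hf)

variable {F : Type*} [NormedAddCommGroup F] [NormedSpace ℝ F]

lemma dadd {f g : E → F} (hf : DifferentiableAt ℝ f x) (hg : DifferentiableAt ℝ g x) :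
    fderiv ℝ (fun y => f y + g y) x u = fderiv ℝ f x u + fderiv ℝ g x u := by
  rw [fderiv_fun_add hf hg]; simp

lemma dsub {f g : E → F} (hf : DifferentiableAt ℝ f x) (hg : DifferentiableAt ℝ g x) :
    fderiv ℝ (fun y => f y - g y) x u = fderiv ℝ f x u - fderiv ℝ g x u := by
  rw [fderiv_fun_sub hf hg]; simp

lemma dsum {ι : Type*} (s : Finset ι) (A : ι → E → F)
    (h : ∀ i ∈ s, DifferentiableAt ℝ (A i) x) :
    fderiv ℝ (fun y => ∑ i ∈ s, A i y) x u = ∑ i ∈ s, fderiv ℝ (A i) x u := by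
  rw [fderiv_fun_sum h]; simp

lemma dconst_mul {𝔸 : Type*} [NormedRing 𝔸] [NormedAlgebra ℝ 𝔸] {f : E → 𝔸}
    (hf : DifferentiableAt ℝ f x) (c : 𝔸) :
    fderiv ℝ (fun y => c * f y) x u = c * fderiv ℝ f x u := by
  rw [fderiv_const_mul hf c]; simp

lemma dmulR {f g : E → ℝ} (hf : DifferentiableAt ℝ f x) (hg : DifferentiableAt ℝ g x) :
    fderiv ℝ (fun y => f y * g y) x u = fderiv ℝ f x u * g x + f x * fderiv ℝ g x u := by
  rw [fderiv_fun_mul hf hg]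
  simp [add_comm, mul_comm]

lemma reconjcomm (z w : ℂ) : ((starRingEnd ℂ) z * w).re = ((starRingEnd ℂ) w * z).re := by
  simp [Complex.mul_re]; ring

end helpers

section euclid
variable {d : ℕ} {x u : EuclideanSpace ℝ (Fin d)}

lemma diff_coord (l : Fin d) :
    DifferentiableAt ℝ (fun y : EuclideanSpace ℝ (Fin d) => y l) x := by
  have : (fun y : EuclideanSpace ℝ (Fin d) => y l) = (EuclideanSpace.proj l : EuclideanSpace ℝ (Fin d) →L[ℝ] ℝ) := rfl
  rw [this]
  exact ContinuousLinearMap.differentiableAt _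

lemma dcoord (l : Fin d) :
    fderiv ℝ (fun y : EuclideanSpace ℝ (Fin d) => y l) x u = u l := by
  have : (fun y : EuclideanSpace ℝ (Fin d) => y l) = (EuclideanSpace.proj l : EuclideanSpace ℝ (Fin d) →L[ℝ] ℝ) := rfl
  rw [this, ContinuousLinearMap.fderiv]
  rfl

lemma diff_coordC (l : Fin d) :
    DifferentiableAt ℝ (fun y : EuclideanSpace ℝ (Fin d) => ((y l : ℝ) : ℂ)) x :=
  (Complex.ofRealCLM.differentiable.differentiableAt).comp x (diff_coord l)

lemma dcoordC (l : Fin d) :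
    fderiv ℝ (fun y : EuclideanSpace ℝ (Fin d) => ((y l : ℝ) : ℂ)) x u = ((u l : ℝ) : ℂ) := by
  have h := (Complex.ofRealCLM.hasFDerivAt.comp x (diff_coord l).hasFDerivAt).fderiv
  have he : (fun y : EuclideanSpace ℝ (Fin d) => ((y l : ℝ) : ℂ))
      = Complex.ofRealCLM ∘ (fun y : EuclideanSpace ℝ (Fin d) => y l) := rfl
  rw [he, h]
  simp [dcoord l]

end euclid


section more
variable {E : Type*} [NormedAddCommGroup E] [NormedSpace ℝ E] {x u : E}

lemma keyalg (w s m P : ℂ) (a k β α' : ℝ) :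
    2 * ((starRingEnd ℂ) ((w + P) - Complex.I * ↑k * ↑β * w + ↑α' * w) * (↑a * w)
        + m * (↑a * s)).re
      = 2 * (1 + α') * a * ‖w‖ ^ 2 + 2 * a * ((starRingEnd ℂ) P * w).re
        + 2 * (m * (↑a * s)).re := by
  rw [normSq_eq_re]
  simp only [map_add, map_sub, map_mul, Complex.conj_ofReal, Complex.conj_I,
    Complex.add_re, Complex.sub_re, Complex.add_im, Complex.sub_im,
    Complex.neg_re, Complex.neg_im, Complex.mul_re, Complex.mul_im,
    Complex.ofReal_re, Complex.ofReal_im, Complex.I_re, Complex.I_im,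
    Complex.conj_re, Complex.conj_im]
  ring

lemma keyalg2 (V XD : ℂ) (k n β α' : ℝ) :
    ((starRingEnd ℂ) (XD - Complex.I * (k:ℂ) * (β:ℂ) * V + (α':ℂ) * V) * ((k:ℂ) ^ 2 * (n:ℂ) * V)).re
      = k ^ 2 * n * ((starRingEnd ℂ) XD * V).re + k ^ 2 * n * α' * ‖V‖ ^ 2 := by
  rw [normSq_eq_re]
  simp only [map_add, map_sub, map_mul, Complex.conj_ofReal, Complex.conj_I,
    Complex.add_re, Complex.sub_re, Complex.add_im, Complex.sub_im,
    Complex.neg_re, Complex.neg_im, Complex.mul_re, Complex.mul_im,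
    Complex.ofReal_re, Complex.ofReal_im, Complex.I_re, Complex.I_im,
    Complex.conj_re, Complex.conj_im, ← Complex.ofReal_pow]
  ring

end more

/-- Morawetz-type pointwise identity (Lemma 4.1): with
`L v = aΔv + k²n v` and `M v = x·∇v − ikβv + αv`,
`2 Re(conj(M v) L v) = div[2Re(conj(M v) a∇v) + x(k²n|v|² − a|∇v|²)]
 − (2α − d + 2)a|∇v|² − (d − 2α)nk²|v|²` at every point of an open set `D`
on which `v` is `C²`. -/
theorem stmt0 {d : ℕ} (hd : 2 ≤ d) (D : Set (EuclideanSpace ℝ (Fin d)))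
    (hD : IsOpen D) (v : EuclideanSpace ℝ (Fin d) → ℂ)
    (hv : ContDiffOn ℝ 2 v D) (a n k α β : ℝ)
    (x : EuclideanSpace ℝ (Fin d)) (hx : x ∈ D) :
    2 * ((starRingEnd ℂ) (xdot v x - Complex.I * k * β * v x + α * v x) *
          (a * lap v x + k ^ 2 * n * v x)).re
      = (∑ j : Fin d, fderiv ℝ (fun y : EuclideanSpace ℝ (Fin d) =>
            2 * ((starRingEnd ℂ) (xdot v y - Complex.I * k * β * v y + α * v y) *
              (a * pd v j y)).re
            + y j * (k ^ 2 * n * ‖v y‖ ^ 2 - a * gradNormSq v y)) x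
            (EuclideanSpace.single j 1))
        - (2 * α - d + 2) * a * gradNormSq v x
        - (d - 2 * α) * n * k ^ 2 * ‖v x‖ ^ 2 := by
  have hvx : ContDiffAt ℝ 2 v x := hv.contDiffAt (hD.mem_nhds hx)
  have hV : DifferentiableAt ℝ v x := hvx.differentiableAt (by norm_num)
  have hf' : ContDiffAt ℝ 1 (fderiv ℝ v) x := hvx.fderiv_right (by norm_num)
  have hfd : DifferentiableAt ℝ (fderiv ℝ v) x := hf'.differentiableAt (by norm_num)
  have hW : ∀ l : Fin d, DifferentiableAt ℝ (pd v l) x := fun l =>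
    hfd.clm_apply (differentiableAt_const _)
  have hsnd : ∀ j l : Fin d, pd (pd v j) l x
      = fderiv ℝ (fderiv ℝ v) x (EuclideanSpace.single l 1) (EuclideanSpace.single j 1) := by
    intro j l
    show fderiv ℝ (fun y => fderiv ℝ v y (EuclideanSpace.single j 1)) x
        (EuclideanSpace.single l 1) = _
    rw [fderiv_clm_apply hfd (differentiableAt_const _)]
    simp
  have hsymm : ∀ j l : Fin d, pd (pd v j) l x = pd (pd v l) j x := by
    intro j l
    rw [hsnd j l, hsnd l j]
    exact (hvx.isSymmSndFDerivAt (by norm_num)) _ _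
  have hxdotD : DifferentiableAt ℝ (xdot v) x := by
    show DifferentiableAt ℝ (fun y => ∑ l : Fin d, ((y l : ℝ) : ℂ) * pd v l y) x
    exact DifferentiableAt.fun_sum (fun l _ => (diff_coordC l).mul (hW l))
  have hMD : DifferentiableAt ℝ
      (fun y => xdot v y - Complex.I * ↑k * ↑β * v y + ↑α * v y) x :=
    ((hxdotD.sub ((differentiableAt_const _).mul hV)).add
      ((differentiableAt_const _).mul hV))
  have hconjM : DifferentiableAt ℝ
      (fun y => (starRingEnd ℂ) (xdot v y - Complex.I * ↑k * ↑β * v y + ↑α * v y)) x :=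
    diff_conj hMD
  have hG : DifferentiableAt ℝ (gradNormSq v) x := by
    show DifferentiableAt ℝ (fun y => ∑ l : Fin d, ‖pd v l y‖ ^ 2) x
    exact DifferentiableAt.fun_sum (fun l _ => diff_normSq (hW l))
  have hNv : DifferentiableAt ℝ (fun y => ‖v y‖ ^ 2) x := diff_normSq hV
  have hR : DifferentiableAt ℝ
      (fun y => k ^ 2 * n * ‖v y‖ ^ 2 - a * gradNormSq v y) x :=
    (hNv.const_mul _).sub (hG.const_mul _)
  have hAj : ∀ j : Fin d, DifferentiableAt ℝ (fun y =>
      2 * ((starRingEnd ℂ) (xdot v y - Complex.I * ↑k * ↑β * v y + ↑α * v y)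
        * (↑a * pd v j y)).re) x := fun j =>
    (diff_re (hconjM.mul ((differentiableAt_const _).mul (hW j)))).const_mul 2
  -- derivative of xdot
  have hxdotd : ∀ j : Fin d, fderiv ℝ (xdot v) x (EuclideanSpace.single j 1)
      = pd v j x + ∑ l : Fin d, ((x l : ℝ) : ℂ) * pd (pd v l) j x := by
    intro j
    show fderiv ℝ (fun y => ∑ l : Fin d, ((y l : ℝ) : ℂ) * pd v l y) x
        (EuclideanSpace.single j 1) = _
    rw [dsum Finset.univ (fun l y => ((y l : ℝ) : ℂ) * pd v l y)
      (fun l _ => (diff_coordC l).mul (hW l))]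
    have h1 : ∀ l : Fin d, fderiv ℝ (fun y => ((y l : ℝ) : ℂ) * pd v l y) x
        (EuclideanSpace.single j 1)
        = ((EuclideanSpace.single j (1:ℝ) l : ℝ) : ℂ) * pd v l x
          + ((x l : ℝ) : ℂ) * pd (pd v l) j x := by
      intro l
      rw [dmul (diff_coordC l) (hW l), dcoordC l]
      rfl
    rw [Finset.sum_congr rfl (fun l _ => h1 l), Finset.sum_add_distrib]
    congr 1
    simp [EuclideanSpace.single_apply, apply_ite (fun r : ℝ => (r : ℂ)), ite_mul]
  -- derivative of M
  have hMd : ∀ j : Fin d, fderiv ℝ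
      (fun y => xdot v y - Complex.I * ↑k * ↑β * v y + ↑α * v y) x (EuclideanSpace.single j 1)
      = (pd v j x + ∑ l : Fin d, ((x l : ℝ) : ℂ) * pd (pd v l) j x)
        - Complex.I * ↑k * ↑β * pd v j x + ↑α * pd v j x := by
    intro j
    rw [dadd (hxdotD.fun_sub ((differentiableAt_const _).fun_mul hV)) ((differentiableAt_const _).fun_mul hV),
        dsub hxdotD ((differentiableAt_const _).fun_mul hV),
        dconst_mul hV (Complex.I * (k : ℂ) * (β : ℂ)), dconst_mul hV ((α : ℝ) : ℂ), hxdotd j]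
    rfl
  have hGd : ∀ j : Fin d, fderiv ℝ (gradNormSq v) x (EuclideanSpace.single j 1)
      = ∑ l : Fin d, 2 * ((starRingEnd ℂ) (pd v l x) * pd (pd v l) j x).re := by
    intro j
    show fderiv ℝ (fun y => ∑ l : Fin d, ‖pd v l y‖ ^ 2) x _ = _
    rw [dsum Finset.univ (fun l y => ‖pd v l y‖ ^ 2) (fun l _ => diff_normSq (hW l))]
    exact Finset.sum_congr rfl (fun l _ => by rw [dnormSq (hW l)]; rfl)
  have hVd2 : ∀ j : Fin d, fderiv ℝ (fun y => ‖v y‖ ^ 2) x (EuclideanSpace.single j 1)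
      = 2 * ((starRingEnd ℂ) (v x) * pd v j x).re := fun j => by rw [dnormSq hV]; rfl
  -- full derivative of the flux component
  have hFd : ∀ j : Fin d, fderiv ℝ (fun y : EuclideanSpace ℝ (Fin d) =>
        2 * ((starRingEnd ℂ) (xdot v y - Complex.I * ↑k * ↑β * v y + ↑α * v y) *
          (↑a * pd v j y)).re
        + y j * (k ^ 2 * n * ‖v y‖ ^ 2 - a * gradNormSq v y)) x (EuclideanSpace.single j 1)
      = 2 * ((starRingEnd ℂ) ((pd v j x + ∑ l : Fin d, ((x l : ℝ) : ℂ) * pd (pd v l) j x)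
              - Complex.I * ↑k * ↑β * pd v j x + ↑α * pd v j x) * (↑a * pd v j x)
            + (starRingEnd ℂ) (xdot v x - Complex.I * ↑k * ↑β * v x + ↑α * v x)
              * (↑a * pd (pd v j) j x)).re
        + ((k ^ 2 * n * ‖v x‖ ^ 2 - a * gradNormSq v x)
          + x j * (k ^ 2 * n * (2 * ((starRingEnd ℂ) (v x) * pd v j x).re)
            - a * ∑ l : Fin d, 2 * ((starRingEnd ℂ) (pd v l x) * pd (pd v l) j x).re)) := by
    intro j
    rw [dadd (hAj j) ((diff_coord j).fun_mul hR)]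
    congr 1
    · rw [dconst_mul (diff_re (hconjM.fun_mul ((differentiableAt_const _).fun_mul (hW j)))) (2 : ℝ),
          dre (hconjM.fun_mul ((differentiableAt_const _).fun_mul (hW j))),
          dmul hconjM ((differentiableAt_const _).fun_mul (hW j)),
          dconj hMD, dconst_mul (hW j) ((a : ℝ) : ℂ), hMd j]
      rfl
    · rw [dmulR (diff_coord j) hR, dcoord j,
          dsub (hNv.const_mul (k ^ 2 * n)) (hG.const_mul a),
          dconst_mul hNv (k ^ 2 * n), dconst_mul hG a, hVd2 j, hGd j]
      simp [EuclideanSpace.single_apply]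
  -- expand conj of the inner sums
  have hPre : ∀ j : Fin d,
      ((starRingEnd ℂ) (∑ l : Fin d, ((x l : ℝ) : ℂ) * pd (pd v l) j x) * pd v j x).re
      = ∑ l : Fin d, x l * ((starRingEnd ℂ) (pd (pd v l) j x) * pd v j x).re := by
    intro j
    rw [map_sum, Finset.sum_mul, Complex.re_sum]
    exact Finset.sum_congr rfl (fun l _ => by
      rw [map_mul, Complex.conj_ofReal, mul_assoc, Complex.re_ofReal_mul])
  have hXD : ((starRingEnd ℂ) (xdot v x) * v x).re
      = ∑ l : Fin d, x l * ((starRingEnd ℂ) (v x) * pd v l x).re := by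
    rw [show xdot v x = ∑ l : Fin d, ((x l : ℝ) : ℂ) * pd v l x from rfl,
      map_sum, Finset.sum_mul, Complex.re_sum]
    exact Finset.sum_congr rfl (fun l _ => by
      rw [map_mul, Complex.conj_ofReal, mul_assoc, Complex.re_ofReal_mul, reconjcomm])
  -- per-term reduction of the summands
  have hEj : ∀ j : Fin d,
      2 * ((starRingEnd ℂ) ((pd v j x + ∑ l : Fin d, ((x l : ℝ) : ℂ) * pd (pd v l) j x)
              - Complex.I * ↑k * ↑β * pd v j x + ↑α * pd v j x) * (↑a * pd v j x)
            + (starRingEnd ℂ) (xdot v x - Complex.I * ↑k * ↑β * v x + ↑α * v x)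
              * (↑a * pd (pd v j) j x)).re
        + ((k ^ 2 * n * ‖v x‖ ^ 2 - a * gradNormSq v x)
          + x j * (k ^ 2 * n * (2 * ((starRingEnd ℂ) (v x) * pd v j x).re)
            - a * ∑ l : Fin d, 2 * ((starRingEnd ℂ) (pd v l x) * pd (pd v l) j x).re))
      = 2 * (1 + α) * a * ‖pd v j x‖ ^ 2
        + 2 * a * (∑ l : Fin d, x l * ((starRingEnd ℂ) (pd (pd v l) j x) * pd v j x).re)
        + 2 * (((starRingEnd ℂ) (xdot v x - Complex.I * ↑k * ↑β * v x + ↑α * v x))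
              * (↑a * pd (pd v j) j x)).re
        + (k ^ 2 * n * ‖v x‖ ^ 2 - a * gradNormSq v x)
        + 2 * k ^ 2 * n * (x j * ((starRingEnd ℂ) (v x) * pd v j x).re)
        - x j * a * (∑ l : Fin d, 2 * ((starRingEnd ℂ) (pd v l x) * pd (pd v l) j x).re) := by
    intro j
    rw [keyalg, hPre j]
    ring
  -- rewrite the divergence sum
  rw [Finset.sum_congr rfl (fun j _ => (hFd j).trans (hEj j))]
  simp only [Finset.sum_sub_distrib, Finset.sum_add_distrib]
  have hT1 : (∑ j : Fin d, 2 * (1 + α) * a * ‖pd v j x‖ ^ 2)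
      = 2 * (1 + α) * a * gradNormSq v x := by
    rw [← Finset.mul_sum]; rfl
  have hT2 : (∑ j : Fin d, 2 * a *
        (∑ l : Fin d, x l * ((starRingEnd ℂ) (pd (pd v l) j x) * pd v j x).re))
      = 2 * a * ∑ j : Fin d, ∑ l : Fin d,
          x l * ((starRingEnd ℂ) (pd (pd v l) j x) * pd v j x).re := by
    rw [← Finset.mul_sum]
  have hT3 : (∑ j : Fin d, 2 * (((starRingEnd ℂ) (xdot v x - Complex.I * ↑k * ↑β * v x + ↑α * v x))
        * (↑a * pd (pd v j) j x)).re)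
      = 2 * (((starRingEnd ℂ) (xdot v x - Complex.I * ↑k * ↑β * v x + ↑α * v x))
        * (↑a * lap v x)).re := by
    rw [show lap v x = ∑ j : Fin d, pd (pd v j) j x from rfl]
    simp only [Finset.mul_sum, Complex.re_sum]
  have hT4a : (∑ _j : Fin d, k ^ 2 * n * ‖v x‖ ^ 2) = (d : ℝ) * (k ^ 2 * n * ‖v x‖ ^ 2) := by
    simp [Finset.sum_const, Finset.card_univ, nsmul_eq_mul]
  have hT4b : (∑ _j : Fin d, a * gradNormSq v x) = (d : ℝ) * (a * gradNormSq v x) := by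
    simp [Finset.sum_const, Finset.card_univ, nsmul_eq_mul]
  have hT5 : (∑ j : Fin d, 2 * k ^ 2 * n * (x j * ((starRingEnd ℂ) (v x) * pd v j x).re))
      = 2 * k ^ 2 * n * ∑ j : Fin d, x j * ((starRingEnd ℂ) (v x) * pd v j x).re := by
    rw [← Finset.mul_sum]
  have hT6 : (∑ j : Fin d, x j * a *
        (∑ l : Fin d, 2 * ((starRingEnd ℂ) (pd v l x) * pd (pd v l) j x).re))
      = 2 * a * ∑ j : Fin d, ∑ l : Fin d,
          x l * ((starRingEnd ℂ) (pd (pd v l) j x) * pd v j x).re := by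
    have step1 : ∀ j : Fin d, x j * a *
          (∑ l : Fin d, 2 * ((starRingEnd ℂ) (pd v l x) * pd (pd v l) j x).re)
        = ∑ l : Fin d, 2 * a * (x j * (((starRingEnd ℂ) (pd (pd v j) l x)) * pd v l x).re) := by
      intro j
      rw [Finset.mul_sum]
      refine Finset.sum_congr rfl (fun l _ => ?_)
      rw [reconjcomm, hsymm l j]
      ring
    rw [Finset.sum_congr rfl (fun j _ => step1 j), Finset.sum_comm, Finset.mul_sum]
    refine Finset.sum_congr rfl (fun j _ => ?_)
    rw [Finset.mul_sum]
  rw [hT1, hT2, hT3, hT4a, hT4b, hT5, hT6,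
    mul_add ((starRingEnd ℂ) (xdot v x - Complex.I * ↑k * ↑β * v x + ↑α * v x))
      (↑a * lap v x) (↑k ^ 2 * ↑n * v x),
    Complex.add_re, mul_add (2 : ℝ), keyalg2 (v x) (xdot v x) k n β α, hXD]
  ring

end
end

section
/- If Ω ⊂ ℝ^d is a bounded Lipschitz open set and Ω is star-shaped with respect to the point x₀ ∈ Ω, then (x − x₀)·n(x) ≥ 0 for every x ∈ ∂Ω at which the outward unit normal n(x) is defined; conversely, if (x − x₀)·n(x) ≥ 0 at every such x, then Ω is star-shaped with respect to x₀. -/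
noncomputable section

open Metric

variable {d : ℕ}

/-- `Ω` is star-shaped with respect to the point `x₀`: every segment from `x₀`
to a point of `Ω` is contained in `Ω`. -/
def StarShapedWrt (Ω : Set (EuclideanSpace ℝ (Fin d)))
    (x₀ : EuclideanSpace ℝ (Fin d)) : Prop :=
  ∀ x ∈ Ω, segment ℝ x₀ x ⊆ Ω

/-- `Ω` has Lipschitz boundary: near each boundary point, `Ω` is the subgraph,
in some unit direction `e`, of a Lipschitz function. -/
def HasLipschitzBoundary (Ω : Set (EuclideanSpace ℝ (Fin d))) : Prop :=
  ∀ x ∈ frontier Ω, ∃ (e : EuclideanSpace ℝ (Fin d)) (r L : ℝ)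
    (f : EuclideanSpace ℝ (Fin d) → ℝ), ‖e‖ = 1 ∧ 0 < r ∧ 0 ≤ L ∧
      LipschitzWith (Real.toNNReal L) f ∧
      ∀ y ∈ ball x r, (y ∈ Ω ↔ (inner ℝ y e : ℝ) < f (y - (inner ℝ y e : ℝ) • e))

/-- `ν` is the outward unit normal of `Ω` at the boundary point `x` (in the
Fréchet sense): `ν` is a unit vector, `⟪ν, y − x⟫ ≤ o(‖y − x‖)` for `y ∈ Ω`
near `x` and `⟪ν, y − x⟫ ≥ −o(‖y − x‖)` for `y ∉ Ω` near `x`. -/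
def IsOutwardNormalAt (Ω : Set (EuclideanSpace ℝ (Fin d)))
    (x ν : EuclideanSpace ℝ (Fin d)) : Prop :=
  ‖ν‖ = 1 ∧ ∀ ε > (0 : ℝ), ∃ δ > (0 : ℝ),
    (∀ y ∈ Ω, ‖y - x‖ < δ → (inner ℝ ν (y - x) : ℝ) ≤ ε * ‖y - x‖) ∧
    (∀ y ∉ Ω, ‖y - x‖ < δ → -(ε * ‖y - x‖) ≤ (inner ℝ ν (y - x) : ℝ))


-- Auxiliary lemmas --

open Metric MeasureTheory Set Filter Topology


open MeasureTheory Set Filter Topology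


lemma tendsto_seq_nhdsNe (c : ℝ) :
    Filter.Tendsto (fun n : ℕ => c + ((n : ℝ) + 1)⁻¹) atTop (𝓝[≠] c) := by
  apply tendsto_nhdsWithin_of_tendsto_nhds_of_eventually_within
  · have : Tendsto (fun n : ℕ => ((n : ℝ) + 1)⁻¹) atTop (𝓝 0) :=
      tendsto_one_div_add_atTop_nhds_zero_nat.congr (by intro n; simp [one_div])
    simpa using tendsto_const_nhds.add this
  · filter_upwards with n
    have : (0:ℝ) < ((n : ℝ) + 1)⁻¹ := by positivity
    simp only [Set.mem_compl_iff, Set.mem_singleton_iff]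
    intro h
    nlinarith [this, h]

/-- FTC-type endpoint limit: for continuous `g`, `(n+1) * ∫_{c}^{c+1/(n+1)} g → g c`. -/
lemma tendsto_avg_integral {g : ℝ → ℝ} (hg : Continuous g) (c : ℝ) :
    Tendsto (fun n : ℕ => ((n : ℝ) + 1) * ∫ x in c..(c + ((n : ℝ) + 1)⁻¹), g x)
      atTop (𝓝 (g c)) := by
  have hG : HasDerivAt (fun u => ∫ x in c..u, g x) (g c) c :=
    intervalIntegral.integral_hasDerivAt_right (hg.intervalIntegrable _ _)
      (hg.stronglyMeasurableAtFilter _ _) hg.continuousAt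
  have hslope := hasDerivAt_iff_tendsto_slope.1 hG
  have := hslope.comp (tendsto_seq_nhdsNe c)
  have heq : ∀ n : ℕ, slope (fun u => ∫ x in c..u, g x) c (c + ((n : ℝ) + 1)⁻¹)
      = ((n : ℝ) + 1) * ∫ x in c..(c + ((n : ℝ) + 1)⁻¹), g x := by
    intro n
    have hne : ((n : ℝ) + 1)⁻¹ ≠ 0 := by positivity
    rw [slope_def_field]
    rw [intervalIntegral.integral_same, sub_zero]
    field_simp
    ring
  exact (this.congr (fun n => heq n))

/-- A real Lipschitz function whose derivative is a.e. nonnegative on `(a,b)`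
satisfies `g a ≤ g b`. -/
lemma LipschitzWith.le_of_ae_deriv_nonneg {g : ℝ → ℝ} {K : NNReal} (hg : LipschitzWith K g)
    {a b : ℝ} (hab : a ≤ b)
    (h : ∀ᵐ t, t ∈ Set.Ioo a b → ∃ g', 0 ≤ g' ∧ HasDerivAt g g' t) : g a ≤ g b := by
  rcases eq_or_lt_of_le hab with rfl | hab'
  · exact le_refl _
  have hgc : Continuous g := hg.continuous
  set hn : ℕ → ℝ := fun n => ((n : ℝ) + 1)⁻¹ with hhn
  have hnpos : ∀ n : ℕ, 0 < hn n := fun n => by positivity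
  set φ : ℕ → ℝ → ℝ := fun n t => ((n : ℝ) + 1) * (g (t + hn n) - g t) with hφ
  -- Step 1: `∫_{Ioo a b} φ n → g b - g a`.
  have key1 : Tendsto (fun n => ∫ t in Ioo a b, φ n t) atTop (𝓝 (g b - g a)) := by
    have hint : ∀ (c d : ℝ) (e : ℝ), IntervalIntegrable (fun t => g (t + e)) volume c d :=
      fun c d e => (hgc.comp (continuous_id.add continuous_const)).intervalIntegrable _ _
    have heq : ∀ n, ∫ t in Ioo a b, φ n t
        = ((n:ℝ)+1) * (∫ x in b..(b + hn n), g x) - ((n:ℝ)+1) * (∫ x in a..(a + hn n), g x) := by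
      intro n
      have h1 : ∫ t in Ioo a b, φ n t = ∫ t in a..b, φ n t := by
        rw [intervalIntegral.integral_of_le hab, integral_Ioc_eq_integral_Ioo]
      rw [h1]
      have h2 : ∫ t in a..b, φ n t
          = ((n:ℝ)+1) * ((∫ t in a..b, g (t + hn n)) - ∫ t in a..b, g t) := by
        rw [← intervalIntegral.integral_sub (hint a b (hn n)) (hgc.intervalIntegrable a b),
          ← intervalIntegral.integral_const_mul]
      rw [h2, intervalIntegral.integral_comp_add_right]
      have h3 : (∫ x in (a + hn n)..(b + hn n), g x) - ∫ x in a..b, g x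
          = (∫ x in b..(b + hn n), g x) - ∫ x in a..(a + hn n), g x := by
        have A : (∫ x in a..(a + hn n), g x) + (∫ x in (a + hn n)..(b + hn n), g x)
            = ∫ x in a..(b + hn n), g x :=
          intervalIntegral.integral_add_adjacent_intervals (hgc.intervalIntegrable _ _)
            (hgc.intervalIntegrable _ _)
        have B : (∫ x in a..b, g x) + (∫ x in b..(b + hn n), g x)
            = ∫ x in a..(b + hn n), g x :=
          intervalIntegral.integral_add_adjacent_intervals (hgc.intervalIntegrable _ _)
            (hgc.intervalIntegrable _ _)
        linarith
      rw [h3]; ring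
    have t1 := tendsto_avg_integral hgc b
    have t2 := tendsto_avg_integral hgc a
    exact Tendsto.congr (fun n => (heq n).symm) (t1.sub t2)
  -- Step 2: `∫_{Ioo a b} φ n → ∫_{Ioo a b} deriv g` by dominated convergence.
  have key2 : Tendsto (fun n => ∫ t in Ioo a b, φ n t) atTop
      (𝓝 (∫ t in Ioo a b, deriv g t)) := by
    apply MeasureTheory.tendsto_integral_of_dominated_convergence (fun _ => (K : ℝ))
    · intro n
      exact ((continuous_const.mul ((hgc.comp (continuous_id.add continuous_const)).sub
        hgc))).aestronglyMeasurable
    · exact integrableOn_const measure_Ioo_lt_top.ne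
    · intro n
      filter_upwards with t
      have hd : |g (t + hn n) - g t| ≤ K * hn n := by
        have := hg.dist_le_mul (t + hn n) t
        simpa [Real.dist_eq, abs_sub_comm, abs_of_pos (hnpos n)] using this
      have hb : ‖φ n t‖ = ((n:ℝ)+1) * |g (t + hn n) - g t| := by
        rw [hφ]; simp [Real.norm_eq_abs, abs_mul]
        left; positivity
      rw [hb]
      calc ((n:ℝ)+1) * |g (t + hn n) - g t| ≤ ((n:ℝ)+1) * (K * hn n) := by
            apply mul_le_mul_of_nonneg_left hd (by positivity)
        _ = (K : ℝ) := by
            rw [hhn]; field_simp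
    · filter_upwards [ae_restrict_of_ae h, ae_restrict_mem measurableSet_Ioo] with t ht htI
      obtain ⟨g', hg'0, hg'⟩ := ht htI
      rw [hg'.deriv]
      have hslope := hasDerivAt_iff_tendsto_slope.1 hg'
      have := hslope.comp (tendsto_seq_nhdsNe t)
      refine this.congr (fun n => ?_)
      show slope g t (t + ((n : ℝ) + 1)⁻¹) = φ n t
      rw [slope_def_field]
      have hne : ((n : ℝ) + 1)⁻¹ ≠ 0 := by positivity
      rw [hφ, hhn]
      field_simp
      ring
  -- Conclude.
  have hEq : g b - g a = ∫ t in Ioo a b, deriv g t := tendsto_nhds_unique key1 key2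
  have hnn : 0 ≤ ∫ t in Ioo a b, deriv g t := by
    apply MeasureTheory.integral_nonneg_of_ae
    filter_upwards [ae_restrict_of_ae h, ae_restrict_mem measurableSet_Ioo] with t ht htI
    obtain ⟨g', hg'0, hg'⟩ := ht htI
    rw [Pi.zero_apply, hg'.deriv]
    exact hg'0
  linarith

/-- Version for functions Lipschitz on `[a,b]` only. -/
lemma LipschitzOnWith.le_of_ae_deriv_nonneg {g : ℝ → ℝ} {K : NNReal} {a b : ℝ}
    (hg : LipschitzOnWith K g (Set.Icc a b)) (hab : a ≤ b)
    (h : ∀ᵐ t, t ∈ Set.Ioo a b → ∃ g', 0 ≤ g' ∧ HasDerivAt g g' t) : g a ≤ g b := by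
  obtain ⟨G, hG, hGeq⟩ := hg.extend_real
  have ha : g a = G a := hGeq (Set.left_mem_Icc.2 hab)
  have hb : g b = G b := hGeq (Set.right_mem_Icc.2 hab)
  rw [ha, hb]
  apply hG.le_of_ae_deriv_nonneg hab
  filter_upwards [h] with t ht htI
  obtain ⟨g', hg'0, hg'⟩ := ht htI
  refine ⟨g', hg'0, ?_⟩
  have hmem : Set.Icc a b ∈ 𝓝 t :=
    mem_nhds_iff.2 ⟨Set.Ioo a b, Set.Ioo_subset_Icc_self, isOpen_Ioo, htI⟩
  have : g =ᶠ[𝓝 t] G := Filter.eventuallyEq_of_mem hmem hGeq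
  exact this.hasDerivAt_iff.1 hg'



local notation "E" => EuclideanSpace ℝ (Fin d)


/-- The "horizontal" composition `y ↦ f (y − ⟨y,e⟩ e)`. -/
def fh (e : EuclideanSpace ℝ (Fin d)) (f : EuclideanSpace ℝ (Fin d) → ℝ) :
    EuclideanSpace ℝ (Fin d) → ℝ :=
  fun y => f (y - (inner ℝ y e : ℝ) • e)

lemma inner_e_self {e : E} (he : ‖e‖ = 1) : (inner ℝ e e : ℝ) = 1 := by
  rw [real_inner_self_eq_norm_sq, he]; norm_num

lemma proj_sub_norm_le {e : E} (he : ‖e‖ = 1) (u : E) :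
    ‖u - (inner ℝ u e : ℝ) • e‖ ≤ ‖u‖ := by
  have h : ‖u - (inner ℝ u e : ℝ) • e‖ ^ 2 ≤ ‖u‖ ^ 2 := by
    rw [norm_sub_sq_real]
    rw [real_inner_smul_right, norm_smul, Real.norm_eq_abs, he]
    have : (inner ℝ u e : ℝ) * (inner ℝ u e : ℝ) = (inner ℝ u e : ℝ)^2 := by ring
    nlinarith [sq_abs (inner ℝ u e : ℝ)]
  nlinarith [norm_nonneg (u - (inner ℝ u e : ℝ) • e), norm_nonneg u]

lemma fh_lipschitz {e : E} (he : ‖e‖ = 1) {K : NNReal} {f : E → ℝ}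
    (hf : LipschitzWith K f) : LipschitzWith K (fh e f) := by
  intro y y'
  have key : fh e f y = f (y - (inner ℝ y e : ℝ) • e) := rfl
  calc edist (fh e f y) (fh e f y')
      ≤ K * edist (y - (inner ℝ y e : ℝ) • e) (y' - (inner ℝ y' e : ℝ) • e) := hf _ _
    _ ≤ K * edist y y' := by
        gcongr
        rw [edist_dist, edist_dist]
        apply ENNReal.ofReal_le_ofReal
        rw [dist_eq_norm, dist_eq_norm]
        have : (y - (inner ℝ y e : ℝ) • e) - (y' - (inner ℝ y' e : ℝ) • e)
            = (y - y') - (inner ℝ (y - y') e : ℝ) • e := by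
          rw [inner_sub_left]
          module
        rw [this]
        exact proj_sub_norm_le he _

lemma fh_translate {e : E} (he : ‖e‖ = 1) (f : E → ℝ) (y : E) (s : ℝ) :
    fh e f (y + s • e) = fh e f y := by
  unfold fh
  congr 1
  rw [inner_add_left, real_inner_smul_left, inner_e_self he]
  module

lemma fh_hasFDerivAt_translate {e : E} (he : ‖e‖ = 1) {f : E → ℝ} {y : E}
    {D : EuclideanSpace ℝ (Fin d) →L[ℝ] ℝ} (hD : HasFDerivAt (fh e f) D y) (s : ℝ) :
    HasFDerivAt (fh e f) D (y + s • e) := by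
  have hmap : HasFDerivAt (fun z : E => z - s • e) (ContinuousLinearMap.id ℝ E) (y + s • e) := by
    simpa using (hasFDerivAt_id (𝕜 := ℝ) (y + s • e)).sub_const (s • e)
  have h1 : HasFDerivAt (fh e f ∘ fun z : E => z - s • e) (D.comp (ContinuousLinearMap.id ℝ E))
      (y + s • e) := by
    apply HasFDerivAt.comp
    · show HasFDerivAt (fh e f) D (y + s • e - s • e)
      rw [add_sub_cancel_right]
      exact hD
    · exact hmap
  have h2 : (fh e f ∘ fun z : E => z - s • e) = fh e f := by
    funext z
    show fh e f (z - s • e) = fh e f z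
    have : z - s • e = z + (-s) • e := by module
    rw [this, fh_translate he]
  rw [h2] at h1
  simpa using h1

lemma fh_fderiv_e {e : E} (he : ‖e‖ = 1) {f : E → ℝ} {y : E}
    {D : EuclideanSpace ℝ (Fin d) →L[ℝ] ℝ} (hD : HasFDerivAt (fh e f) D y) : D e = 0 := by
  have hline : HasDerivAt (fun t : ℝ => y + t • e) e 0 := by
    simpa using ((hasDerivAt_id (0:ℝ)).smul_const e).const_add y
  have hD' : HasFDerivAt (fh e f) D (y + (0:ℝ) • e) := by simpa using hD
  have hcomp : HasDerivAt (fun t : ℝ => fh e f (y + t • e)) (D e) 0 := by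
    have := hD'.comp_hasDerivAt 0 hline
    exact this
  have hconst : (fun t : ℝ => fh e f (y + t • e)) = fun _ => fh e f y := by
    funext t; rw [fh_translate he]
  rw [hconst] at hcomp
  have := (hasDerivAt_const (0:ℝ) (fh e f y)).unique hcomp
  exact this.symm

lemma frontier_normal_ineq {Ω : Set (EuclideanSpace ℝ (Fin d))} {x₀ : E}
    (hyp : ∀ x ∈ frontier Ω, ∀ ν, IsOutwardNormalAt Ω x ν → 0 ≤ (inner ℝ (x - x₀) ν : ℝ))
    {e p : E} (he : ‖e‖ = 1) {r : ℝ} (hr : 0 < r) {f : E → ℝ} {K : NNReal}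
    (hf : LipschitzWith K f)
    (hgraph : ∀ y ∈ ball p r, (y ∈ Ω ↔ (inner ℝ y e : ℝ) < f (y - (inner ℝ y e : ℝ) • e)))
    {x : E} (hx : x ∈ ball p r) (hFx : (inner ℝ x e : ℝ) = fh e f x)
    {D : EuclideanSpace ℝ (Fin d) →L[ℝ] ℝ} (hD : HasFDerivAt (fh e f) D x) :
    0 ≤ (inner ℝ (x - x₀) e : ℝ) - D (x - x₀) := by
  classical
  set F : E → ℝ := fun y => (inner ℝ y e : ℝ) - fh e f y with hFdef
  have hmem : ∀ y ∈ ball p r, (y ∈ Ω ↔ F y < 0) := by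
    intro y hy
    rw [hgraph y hy, hFdef]
    constructor
    · intro h; simpa [fh] using sub_neg.2 h
    · intro h; exact sub_neg.1 (by simpa [fh] using h)
  have hFx0 : F x = 0 := by rw [hFdef]; simp [hFx]
  -- the candidate normal
  set g : E := (InnerProductSpace.toDual ℝ E).symm D with hgdef
  have hg : ∀ u : E, (inner ℝ g u : ℝ) = D u := fun u => InnerProductSpace.toDual_symm_apply
  have hDe : D e = 0 := fh_fderiv_e he hD
  have hge : (inner ℝ e g : ℝ) = 0 := by rw [real_inner_comm, hg, hDe]
  set z : E := e - g with hzdef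
  have hz2 : ‖z‖ ^ 2 = 1 + ‖g‖ ^ 2 := by
    rw [hzdef, norm_sub_sq_real, he, hge]; ring
  have hz1 : 1 ≤ ‖z‖ := by nlinarith [norm_nonneg z, sq_nonneg (‖g‖)]
  have hz0 : ‖z‖ ≠ 0 := by positivity
  have hzinv : ‖z‖⁻¹ ≤ 1 := by
    rw [inv_le_one_iff₀]; right; exact hz1
  have hzinvpos : 0 < ‖z‖⁻¹ := by positivity
  set ν : E := ‖z‖⁻¹ • z with hνdef
  have hν1 : ‖ν‖ = 1 := by
    rw [hνdef, norm_smul, Real.norm_eq_abs, abs_of_pos hzinvpos, inv_mul_cancel₀ hz0]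
  -- derivative of F
  have hFinner : HasFDerivAt (fun y : E => (inner ℝ y e : ℝ)) (innerSL ℝ e) x := by
    have heq : (fun y : E => (inner ℝ y e : ℝ)) = fun y => innerSL ℝ e y :=
      funext fun y => by rw [innerSL_apply_apply, real_inner_comm]
    rw [heq]
    exact (innerSL ℝ e).hasFDerivAt
  have hF : HasFDerivAt F (innerSL ℝ e - D) x := hFinner.sub hD
  have hℓ : ∀ u : E, (innerSL ℝ e - D) u = (inner ℝ z u : ℝ) := by
    intro u
    rw [hzdef, inner_sub_left, hg u]
    simp [real_inner_comm]
  -- x is on the frontier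
  have hxnot : x ∉ Ω := fun hmem' => by
    have := (hmem x hx).1 hmem'
    rw [hFx0] at this; exact lt_irrefl 0 this
  have hxcl : x ∈ closure Ω := by
    rw [Metric.mem_closure_iff]
    intro ε hε
    set s := min (ε / 2) ((r - dist x p) / 2) with hsdef
    have hspos : 0 < s := by
      apply lt_min (by positivity)
      have : dist x p < r := mem_ball.1 hx
      linarith
    refine ⟨x - s • e, ?_, ?_⟩
    · apply (hmem _ ?_).2
      · show F (x - s • e) < 0
        have h1 : x - s • e = x + (-s) • e := by module
        have h2 : F (x + (-s) • e) = F x - s := by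
          rw [hFdef]
          simp only
          rw [fh_translate he, inner_add_left, real_inner_smul_left, inner_e_self he]
          ring
        rw [h1, h2, hFx0]
        linarith
      · rw [mem_ball]
        calc dist (x - s • e) p ≤ dist (x - s • e) x + dist x p := dist_triangle _ _ _
          _ = s + dist x p := by
              rw [dist_eq_norm]
              simp [norm_smul, abs_of_pos hspos, he]
          _ < r := by
              have h3 : s ≤ (r - dist x p) / 2 := min_le_right _ _
              have : dist x p < r := mem_ball.1 hx
              linarith
    · rw [dist_eq_norm]
      have : ‖x - (x - s • e)‖ = s := by
        have h4 : x - (x - s • e) = s • e := by module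
        rw [h4]; simp [norm_smul, abs_of_pos hspos, he]
      rw [this]
      have : s ≤ ε / 2 := min_le_left _ _
      linarith
  have hxfront : x ∈ frontier Ω := by
    rw [frontier_eq_closure_inter_closure]
    exact ⟨hxcl, subset_closure hxnot⟩
  -- x has outward normal ν
  have hnormal : IsOutwardNormalAt Ω x ν := by
    refine ⟨hν1, ?_⟩
    intro ε hε
    have hlo := hF.isLittleO.def hε
    rw [Metric.eventually_nhds_iff] at hlo
    obtain ⟨δ₁, hδ₁, hlo⟩ := hlo
    refine ⟨min δ₁ (r - dist x p), by
      have : dist x p < r := mem_ball.1 hx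
      apply lt_min hδ₁; linarith, ?_, ?_⟩
    · intro y hy hyx
      have hyball : y ∈ ball p r := by
        rw [mem_ball]
        calc dist y p ≤ dist y x + dist x p := dist_triangle _ _ _
          _ < (r - dist x p) + dist x p := by
              have : dist y x < r - dist x p := lt_of_lt_of_le (by rwa [dist_eq_norm]) (min_le_right _ _)
              linarith
          _ = r := by ring
      have hFy : F y < 0 := (hmem y hyball).1 hy
      have hest := hlo (y := y) (by rw [dist_eq_norm]; exact lt_of_lt_of_le hyx (min_le_left _ _))
      rw [hFx0] at hest
      rw [Real.norm_eq_abs] at hest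
      obtain ⟨hestl, hestr⟩ := abs_le.1 hest
      have h5 : (innerSL ℝ e - D) (y - x) ≤ ε * ‖y - x‖ := by linarith
      have h7 : (inner ℝ ν (y - x) : ℝ) = ‖z‖⁻¹ * (inner ℝ z (y - x) : ℝ) := by
        rw [hνdef, real_inner_smul_left]
      rw [h7, ← hℓ]
      calc ‖z‖⁻¹ * (innerSL ℝ e - D) (y - x) ≤ ‖z‖⁻¹ * (ε * ‖y - x‖) := by
            apply mul_le_mul_of_nonneg_left h5 (le_of_lt hzinvpos)
        _ ≤ 1 * (ε * ‖y - x‖) := by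
            apply mul_le_mul_of_nonneg_right hzinv (by positivity)
        _ = ε * ‖y - x‖ := one_mul _
    · intro y hy hyx
      have hyball : y ∈ ball p r := by
        rw [mem_ball]
        calc dist y p ≤ dist y x + dist x p := dist_triangle _ _ _
          _ < (r - dist x p) + dist x p := by
              have : dist y x < r - dist x p := lt_of_lt_of_le (by rwa [dist_eq_norm]) (min_le_right _ _)
              linarith
          _ = r := by ring
      have hFy : 0 ≤ F y := le_of_not_gt (fun hlt => hy ((hmem y hyball).2 hlt))
      have hest := hlo (y := y) (by rw [dist_eq_norm]; exact lt_of_lt_of_le hyx (min_le_left _ _))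
      rw [hFx0] at hest
      rw [Real.norm_eq_abs] at hest
      obtain ⟨hestl, hestr⟩ := abs_le.1 hest
      have h5 : -(ε * ‖y - x‖) ≤ (innerSL ℝ e - D) (y - x) := by linarith
      have h7 : (inner ℝ ν (y - x) : ℝ) = ‖z‖⁻¹ * (inner ℝ z (y - x) : ℝ) := by
        rw [hνdef, real_inner_smul_left]
      rw [h7, ← hℓ]
      have hsum : 0 ≤ (innerSL ℝ e - D) (y - x) + ε * ‖y - x‖ := by linarith
      have hA : 0 ≤ ‖z‖⁻¹ * ((innerSL ℝ e - D) (y - x) + ε * ‖y - x‖) :=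
        mul_nonneg hzinvpos.le hsum
      rw [mul_add] at hA
      have hB : ‖z‖⁻¹ * (ε * ‖y - x‖) ≤ 1 * (ε * ‖y - x‖) :=
        mul_le_mul_of_nonneg_right hzinv (by positivity)
      rw [one_mul] at hB
      linarith
  -- conclude using the hypothesis
  have h0 := hyp x hxfront ν hnormal
  have h8 : (inner ℝ (x - x₀) ν : ℝ) = ‖z‖⁻¹ * (inner ℝ (x - x₀) z : ℝ) := by
    rw [hνdef, real_inner_smul_right]
  rw [h8] at h0
  have h9 : 0 ≤ (inner ℝ (x - x₀) z : ℝ) := by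
    by_contra h
    push_neg at h
    nlinarith
  rw [hzdef, inner_sub_right] at h9
  have h10 : (inner ℝ (x - x₀) g : ℝ) = D (x - x₀) := by rw [real_inner_comm]; exact hg _
  linarith

lemma ae_line_differentiable {g : EuclideanSpace ℝ (Fin d) → ℝ} {K : NNReal}
    (hg : LipschitzWith K g) (x₀ v : E) {a b : ℝ} (ha : 0 < a) :
    ∀ᵐ w : E, ∀ᵐ t : ℝ, t ∈ Set.Ioo a b → DifferentiableAt ℝ g (x₀ + t • (v + w)) := by
  set N : Set E := {y | ¬ DifferentiableAt ℝ g y} with hNdef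
  have hN : volume N = 0 := by
    have := hg.ae_differentiableAt (μ := volume)
    rwa [MeasureTheory.ae_iff] at this
  have hNmeas : MeasurableSet N := (measurableSet_of_differentiableAt ℝ g).compl
  set S : Set (ℝ × EuclideanSpace ℝ (Fin d)) :=
    {q | q.1 ∈ Set.Ioo a b ∧ x₀ + q.1 • (v + q.2) ∈ N} with hSdef
  have hΦ : Continuous (fun q : ℝ × EuclideanSpace ℝ (Fin d) => x₀ + q.1 • (v + q.2)) :=
    continuous_const.add (continuous_fst.smul (continuous_const.add continuous_snd))
  have hSmeas : MeasurableSet S := by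
    have h1 : S = (Set.Ioo a b ×ˢ (Set.univ : Set (EuclideanSpace ℝ (Fin d)))) ∩
        ((fun q : ℝ × EuclideanSpace ℝ (Fin d) => x₀ + q.1 • (v + q.2)) ⁻¹' N) := by
      ext q; simp [hSdef, Set.mem_prod]
    rw [h1]
    exact (measurableSet_Ioo.prod MeasurableSet.univ).inter (hΦ.measurable hNmeas)
  have hS0 : (volume.prod volume) S = 0 := by
    rw [MeasureTheory.Measure.measure_prod_null hSmeas]
    filter_upwards with t
    show volume (Prod.mk t ⁻¹' S) = 0
    by_cases ht : t ∈ Set.Ioo a b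
    · have htne : t ≠ 0 := by
        intro h; rw [h] at ht; exact absurd ht.1 (by linarith)
      have hsec : Prod.mk t ⁻¹' S
          = (fun w => t • w) ⁻¹' ((fun u => (x₀ + t • v) + u) ⁻¹' N) := by
        ext w
        simp only [hSdef, Set.mem_preimage, Set.mem_setOf_eq, Prod.fst, Prod.snd]
        have heq : x₀ + t • (v + w) = (x₀ + t • v) + t • w := by module
        constructor
        · rintro ⟨-, h⟩
          rw [heq] at h
          exact h
        · intro h
          refine ⟨ht, ?_⟩
          rw [heq]
          exact h
      rw [hsec]
      have h2 : volume ((fun u => (x₀ + t • v) + u) ⁻¹' N) = 0 := by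
        rw [measure_preimage_add]
        exact hN
      rw [MeasureTheory.Measure.addHaar_preimage_smul volume htne]
      rw [h2, mul_zero]
    · have : Prod.mk t ⁻¹' S = ∅ := by
        ext w
        simp only [hSdef, Set.mem_preimage, Set.mem_setOf_eq, Set.mem_empty_iff_false,
          iff_false, not_and, Set.mem_Ioo]
        intro h1
        exact absurd h1 ht
      rw [this, measure_empty]
  have hS0' : (volume.prod volume) (Prod.swap ⁻¹' S) = 0 := by
    rw [← MeasureTheory.Measure.map_apply measurable_swap hSmeas]
    rw [MeasureTheory.Measure.prod_swap]
    exact hS0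
  have hae : ∀ᵐ q : EuclideanSpace ℝ (Fin d) × ℝ ∂(volume.prod volume), q ∉ Prod.swap ⁻¹' S := by
    rw [MeasureTheory.ae_iff]
    simp only [not_not]
    exact hS0'
  have := MeasureTheory.Measure.ae_ae_of_ae_prod hae
  filter_upwards [this] with w hw
  filter_upwards [hw] with t htS
  intro htI
  simp only [Set.mem_preimage, Prod.swap_prod_mk, hSdef, Set.mem_setOf_eq] at htS
  push_neg at htS
  have := htS htI
  rw [hNdef, Set.mem_setOf_eq, not_not] at this
  exact this

set_option maxHeartbeats 2000000 in
lemma converse_direction {Ω : Set (EuclideanSpace ℝ (Fin d))}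
    (hΩopen : IsOpen Ω) (x₀ : E) (hx₀ : x₀ ∈ Ω)
    (hΩlip : ∀ x ∈ frontier Ω, ∃ (e : EuclideanSpace ℝ (Fin d)) (r L : ℝ)
      (f : EuclideanSpace ℝ (Fin d) → ℝ), ‖e‖ = 1 ∧ 0 < r ∧ 0 ≤ L ∧
        LipschitzWith (Real.toNNReal L) f ∧
        ∀ y ∈ ball x r, (y ∈ Ω ↔ (inner ℝ y e : ℝ) < f (y - (inner ℝ y e : ℝ) • e)))
    (hyp : ∀ x ∈ frontier Ω, ∀ ν, IsOutwardNormalAt Ω x ν → 0 ≤ (inner ℝ (x - x₀) ν : ℝ)) :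
    StarShapedWrt Ω x₀ := by
  classical
  intro z hz
  by_contra hns
  rw [Set.not_subset] at hns
  obtain ⟨q, hqseg, hqΩ⟩ := hns
  rw [segment_eq_image'] at hqseg
  obtain ⟨s, hs01, hq⟩ := hqseg
  set v : E := z - x₀ with hvdef
  have hq' : x₀ + s • v = q := hq
  have hs0 : s ≠ 0 := by
    intro h
    apply hqΩ
    rw [← hq', h]
    simpa using hx₀
  have hs1 : s ≠ 1 := by
    intro h
    apply hqΩ
    rw [← hq', h]
    have h1 : x₀ + (1:ℝ) • v = z := by rw [hvdef]; module
    rwa [h1]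
  have hspos : 0 < s := lt_of_le_of_ne hs01.1 (Ne.symm hs0)
  -- last exit time
  set T : Set ℝ := {t | t ∈ Set.Icc s 1 ∧ x₀ + t • v ∉ Ω} with hTdef
  have hTne : s ∈ T := ⟨⟨le_refl s, lt_of_le_of_ne hs01.2 hs1 |>.le⟩, by rwa [hq']⟩
  have hγ0cont : Continuous (fun t : ℝ => x₀ + t • v) :=
    continuous_const.add (continuous_id.smul continuous_const)
  have hTclosed : IsClosed T := by
    have : T = Set.Icc s 1 ∩ ((fun t : ℝ => x₀ + t • v) ⁻¹' Ωᶜ) := rfl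
    rw [this]
    exact isClosed_Icc.inter (hΩopen.isClosed_compl.preimage hγ0cont)
  have hTsub : T ⊆ Set.Icc s 1 := fun t ht => ht.1
  have hTcpt : IsCompact T := isCompact_Icc.of_isClosed_subset hTclosed hTsub
  set b : ℝ := sSup T with hbdef
  have hbT : b ∈ T := hTcpt.sSup_mem ⟨s, hTne⟩
  have hbIcc : b ∈ Set.Icc s 1 := hbT.1
  have hbpos : 0 < b := lt_of_lt_of_le hspos hbIcc.1
  set p : E := x₀ + b • v with hpdef
  have hpΩ : p ∉ Ω := hbT.2
  have hb1 : b < 1 := by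
    rcases lt_or_eq_of_le hbIcc.2 with h | h
    · exact h
    · exfalso
      apply hpΩ
      rw [hpdef, h]
      have : x₀ + (1:ℝ) • v = z := by rw [hvdef]; module
      rwa [this]
  have hafter : ∀ t, b < t → t ≤ 1 → x₀ + t • v ∈ Ω := by
    intro t hbt ht1
    by_contra hmem
    have : t ∈ T := ⟨⟨le_trans hbIcc.1 hbt.le, ht1⟩, hmem⟩
    have := le_csSup hTcpt.bddAbove this
    linarith
  have hpcl : p ∈ closure Ω := by
    rw [Metric.mem_closure_iff]
    intro ε hε
    set t : ℝ := min 1 (b + ε / (‖v‖ + 1)) with htdef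
    have hbt : b < t := by
      apply lt_min hb1
      have : 0 < ε / (‖v‖ + 1) := by positivity
      linarith
    refine ⟨x₀ + t • v, hafter t hbt (min_le_left _ _), ?_⟩
    rw [dist_eq_norm]
    have h1 : p - (x₀ + t • v) = (b - t) • v := by rw [hpdef]; module
    rw [h1, norm_smul, Real.norm_eq_abs, abs_of_neg (by linarith)]
    have h2 : t ≤ b + ε / (‖v‖ + 1) := min_le_right _ _
    have h3 : -(b - t) ≤ ε / (‖v‖ + 1) := by linarith
    calc -(b - t) * ‖v‖ ≤ ε / (‖v‖ + 1) * ‖v‖ := by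
          apply mul_le_mul_of_nonneg_right h3 (norm_nonneg _)
      _ < ε := by
          rw [div_mul_eq_mul_div, div_lt_iff₀ (by positivity)]
          nlinarith [norm_nonneg v]
  have hpfront : p ∈ frontier Ω := by
    rw [hΩopen.frontier_eq, Set.mem_diff]
    exact ⟨hpcl, hpΩ⟩
  -- local graph at p
  obtain ⟨e, r, L, f, he, hr, hL, hflip, hgraph⟩ := hΩlip p hpfront
  have hfhlip : LipschitzWith (Real.toNNReal L) (fh e f) := fh_lipschitz he hflip
  set F : E → ℝ := fun y => (inner ℝ y e : ℝ) - fh e f y with hFdef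
  have hmemF : ∀ y ∈ ball p r, (y ∈ Ω ↔ F y < 0) := by
    intro y hy
    rw [hgraph y hy, hFdef]
    constructor
    · intro h; simpa [fh] using sub_neg.2 h
    · intro h; exact sub_neg.1 (by simpa [fh] using h)
  have hFcont : Continuous F := by
    apply Continuous.sub
    · exact continuous_id.inner continuous_const
    · exact hfhlip.continuous
  -- Lipschitz estimate for F
  have hLcoe : ((Real.toNNReal L : NNReal) : ℝ) = L := Real.coe_toNNReal L hL
  have hFlip : ∀ y y' : E, |F y - F y'| ≤ (1 + L) * ‖y - y'‖ := by
    intro y y'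
    have h1 : F y - F y' = (inner ℝ (y - y') e : ℝ) - (fh e f y - fh e f y') := by
      rw [hFdef]; simp only [inner_sub_left]; ring
    rw [h1]
    have h2 : |(inner ℝ (y - y') e : ℝ)| ≤ ‖y - y'‖ := by
      calc |(inner ℝ (y - y') e : ℝ)| ≤ ‖y - y'‖ * ‖e‖ := abs_real_inner_le_norm _ _
        _ = ‖y - y'‖ := by rw [he, mul_one]
    have h3 : |fh e f y - fh e f y'| ≤ L * ‖y - y'‖ := by
      have := hfhlip.dist_le_mul y y'
      rwa [Real.dist_eq, dist_eq_norm, hLcoe] at this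
    calc |(inner ℝ (y - y') e : ℝ) - (fh e f y - fh e f y')|
        ≤ |(inner ℝ (y - y') e : ℝ)| + |fh e f y - fh e f y'| := abs_sub _ _
      _ ≤ ‖y - y'‖ + L * ‖y - y'‖ := add_le_add h2 h3
      _ = (1 + L) * ‖y - y'‖ := by ring
  have hFp : F p = 0 := by
    have h1 : ¬ F p < 0 := fun h => hpΩ ((hmemF p (mem_ball_self hr)).2 h)
    have h2 : ¬ 0 < F p := by
      intro h
      have hopen : IsOpen {y : E | 0 < F y} := isOpen_lt continuous_const hFcont
      have hnb : ({y : E | 0 < F y} ∩ ball p r) ∈ 𝓝 p :=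
        Filter.inter_mem (hopen.mem_nhds h) (ball_mem_nhds p hr)
      obtain ⟨y, hy1, hy2⟩ := mem_closure_iff_nhds.1 hpcl _ hnb
      have := (hmemF y hy1.2).1 hy2
      exact absurd this (not_lt.2 hy1.1.le)
    linarith [le_of_not_gt h1, le_of_not_gt h2]
  -- the graph map
  set Ψ : E → E := fun y => y + (fh e f y - (inner ℝ y e : ℝ)) • e with hΨdef
  have hΨcont : Continuous Ψ :=
    continuous_id.add (((hfhlip.continuous).sub (continuous_id.inner continuous_const)).smul
      continuous_const)
  have hΨp : Ψ p = p := by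
    rw [hΨdef]
    have : fh e f p - (inner ℝ p e : ℝ) = 0 := by
      have := hFp
      rw [hFdef] at this
      simp only at this
      linarith [this]
    simp only [this, zero_smul, add_zero]
  set γfun : E → ℝ → E := fun w t => x₀ + t • (v + w) with hγdef
  have hγcont : Continuous (fun q : E × ℝ => γfun q.1 q.2) :=
    continuous_const.add (continuous_snd.smul (continuous_const.add continuous_fst))
  have hγ0b : γfun 0 b = p := by rw [hγdef, hpdef]; simp
  -- choose ρ by continuity
  have hΘcont : Continuous (fun q : E × ℝ => (γfun q.1 q.2, Ψ (γfun q.1 q.2))) :=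
    hγcont.prodMk (hΨcont.comp hγcont)
  have hnb : (ball p r ×ˢ ball p r) ∈ 𝓝 ((p : E), (p : E)) :=
    prod_mem_nhds (ball_mem_nhds p hr) (ball_mem_nhds p hr)
  have hpre : (fun q : E × ℝ => (γfun q.1 q.2, Ψ (γfun q.1 q.2))) ⁻¹'
      (ball p r ×ˢ ball p r) ∈ 𝓝 ((0 : E), b) := by
    apply hΘcont.continuousAt.preimage_mem_nhds
    show (ball p r ×ˢ ball p r) ∈ 𝓝 (γfun (0:E) b, Ψ (γfun (0:E) b))
    rw [hγ0b, hΨp]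
    exact hnb
  obtain ⟨ρ, hρpos, hρ⟩ := Metric.mem_nhds_iff.1 hpre
  have hρprop : ∀ (w : E) (t : ℝ), ‖w‖ < ρ → |t - b| < ρ →
      γfun w t ∈ ball p r ∧ Ψ (γfun w t) ∈ ball p r := by
    intro w t hw ht
    have : ((w, t) : E × ℝ) ∈ Metric.ball ((0 : E), b) ρ := by
      rw [mem_ball, Prod.dist_eq, max_lt_iff]
      constructor
      · rwa [dist_eq_norm, sub_zero]
      · rwa [Real.dist_eq]
    have := hρ this
    rw [Set.mem_preimage, Set.mem_prod] at this
    exact this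
  -- choose t₂
  set t₂ : ℝ := min (b + ρ / 2) ((b + 1) / 2) with ht₂def
  have hbt₂ : b < t₂ := by
    apply lt_min (by linarith)
    linarith
  have ht₂1 : t₂ ≤ 1 := le_trans (min_le_right _ _) (by linarith)
  have ht₂b : t₂ - b ≤ ρ / 2 := by
    have := min_le_left (b + ρ / 2) ((b + 1) / 2)
    rw [ht₂def]; linarith [this]
  have ht₂pos : 0 < t₂ := lt_trans hbpos hbt₂
  have hzt₂ : γfun 0 t₂ ∈ Ω := by
    rw [hγdef]
    simpa using hafter t₂ hbt₂ ht₂1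
  have hγ0t₂ball : γfun 0 t₂ ∈ ball p r :=
    (hρprop 0 t₂ (by simpa using hρpos) (by rw [abs_of_pos (by linarith)]; linarith)).1
  set η : ℝ := -F (γfun 0 t₂) with hηdef
  have hη : 0 < η := by
    rw [hηdef, neg_pos]
    exact (hmemF _ hγ0t₂ball).1 hzt₂
  -- choose good w
  have hae := ae_line_differentiable (K := Real.toNNReal L) hfhlip x₀ v
    (a := b) (b := t₂) hbpos
  set ε₀ : ℝ := min (ρ / 2) (η / (2 * (1 + L) * t₂ + 1)) with hε₀def
  have hε₀pos : 0 < ε₀ := by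
    apply lt_min (by linarith)
    positivity
  obtain ⟨w, hwball, hwG⟩ : ∃ w : E, w ∈ ball (0 : E) ε₀ ∧
      (∀ᵐ t : ℝ, t ∈ Set.Ioo b t₂ → DifferentiableAt ℝ (fh e f) (x₀ + t • (v + w))) := by
    by_contra hcon
    push_neg at hcon
    have hae2 : ∀ᵐ w : E, w ∉ ball (0 : E) ε₀ := by
      filter_upwards [hae] with w hw
      intro hmem
      exact hcon w hmem (by filter_upwards [hw] with t ht; exact fun h => h.2 (ht h.1))
    have hball0 : volume (ball (0 : E) ε₀) = 0 :=
      measure_mono_null (fun w hw => not_not_intro hw) (MeasureTheory.ae_iff.mp hae2)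
    have hpos := Metric.measure_ball_pos volume (0 : E) hε₀pos
    exact absurd hball0 (ne_of_gt hpos)
  have hwnorm : ‖w‖ < ε₀ := by rwa [mem_ball, dist_eq_norm, sub_zero] at hwball
  have hwρ : ‖w‖ < ρ / 2 := lt_of_lt_of_le hwnorm (min_le_left _ _)
  have hwη : ‖w‖ < η / (2 * (1 + L) * t₂ + 1) := lt_of_lt_of_le hwnorm (min_le_right _ _)
  -- the function along the perturbed ray
  set u : ℝ → ℝ := fun t => F (γfun w t) with hudef
  set ψ : ℝ → ℝ := fun t => u t / t with hψdef
  -- bounds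
  have hγdiff : ∀ t t' : ℝ, γfun w t - γfun w t' = (t - t') • (v + w) := by
    intro t t'; rw [hγdef]; simp only; module
  have hulip : ∀ t t' : ℝ, |u t - u t'| ≤ ((1 + L) * ‖v + w‖) * |t - t'| := by
    intro t t'
    calc |u t - u t'| ≤ (1 + L) * ‖γfun w t - γfun w t'‖ := hFlip _ _
      _ = ((1 + L) * ‖v + w‖) * |t - t'| := by
          rw [hγdiff, norm_smul, Real.norm_eq_abs]; ring
  have hubound : ∀ t ∈ Set.Icc b t₂, |u t| ≤ |u b| + ((1 + L) * ‖v + w‖) * (t₂ - b) := by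
    intro t ht
    have h1 := hulip t b
    have h2 : |t - b| ≤ t₂ - b := by
      rw [abs_of_nonneg (by linarith [ht.1])]
      linarith [ht.2]
    have h3 : |u t| - |u b| ≤ |u t - u b| := abs_sub_abs_le_abs_sub _ _
    have h4 : ((1 + L) * ‖v + w‖) * |t - b| ≤ ((1 + L) * ‖v + w‖) * (t₂ - b) := by
      apply mul_le_mul_of_nonneg_left h2 (by positivity)
    linarith
  set Ku : ℝ := (1 + L) * ‖v + w‖ with hKudef
  set Mu : ℝ := |u b| + Ku * (t₂ - b) with hMudef
  have hKupos : 0 ≤ Ku := by positivity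
  have hMupos : 0 ≤ Mu := by
    rw [hMudef]
    have := abs_nonneg (u b)
    nlinarith [hKupos]
  -- ψ is Lipschitz on [b, t₂]
  have hψlip : LipschitzOnWith (Real.toNNReal ((Ku * t₂ + Mu) / b ^ 2)) ψ (Set.Icc b t₂) := by
    rw [lipschitzOnWith_iff_dist_le_mul]
    intro x hx y hy
    rw [Real.dist_eq, Real.dist_eq]
    have hxpos : 0 < x := lt_of_lt_of_le hbpos hx.1
    have hypos : 0 < y := lt_of_lt_of_le hbpos hy.1
    have hψdiff : ψ x - ψ y = ((u x - u y) * y + u y * (y - x)) / (x * y) := by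
      rw [hψdef]
      field_simp
      ring
    rw [hψdiff, abs_div]
    have hden : |x * y| = x * y := abs_of_pos (by positivity)
    rw [hden]
    have hnum : |(u x - u y) * y + u y * (y - x)| ≤ (Ku * t₂ + Mu) * |x - y| := by
      calc |(u x - u y) * y + u y * (y - x)|
          ≤ |(u x - u y) * y| + |u y * (y - x)| := abs_add_le _ _
        _ = |u x - u y| * |y| + |u y| * |y - x| := by rw [abs_mul, abs_mul]
        _ ≤ (Ku * |x - y|) * t₂ + Mu * |x - y| := by
            apply add_le_add
            · apply mul_le_mul (hulip x y) (by rw [abs_of_pos hypos]; exact hy.2)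
                (abs_nonneg _) (by positivity)
            · rw [abs_sub_comm y x]
              apply mul_le_mul_of_nonneg_right (hubound y hy) (abs_nonneg _)
        _ = (Ku * t₂ + Mu) * |x - y| := by ring
    have hb2 : b ^ 2 ≤ x * y := by nlinarith [hx.1, hy.1, hbpos]
    have h5 : |(u x - u y) * y + u y * (y - x)| / (x * y) ≤ (Ku * t₂ + Mu) * |x - y| / b ^ 2 := by
      apply div_le_div₀ (by positivity) hnum (by positivity) hb2
    calc |(u x - u y) * y + u y * (y - x)| / (x * y)
        ≤ (Ku * t₂ + Mu) * |x - y| / b ^ 2 := h5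
      _ = ((Ku * t₂ + Mu) / b ^ 2) * |x - y| := by ring
      _ = (Real.toNNReal ((Ku * t₂ + Mu) / b ^ 2) : ℝ) * |x - y| := by
          rw [Real.coe_toNNReal _ (by positivity)]
  -- a.e. derivative of ψ is nonneg on (b, t₂)
  have hψderiv : ∀ᵐ t : ℝ, t ∈ Set.Ioo b t₂ → ∃ g', 0 ≤ g' ∧ HasDerivAt ψ g' t := by
    filter_upwards [hwG] with t ht htI
    have hdiff : DifferentiableAt ℝ (fh e f) (γfun w t) := ht htI
    set D := fderiv ℝ (fh e f) (γfun w t) with hDdef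
    have hD : HasFDerivAt (fh e f) D (γfun w t) := hdiff.hasFDerivAt
    have htpos : 0 < t := lt_trans hbpos htI.1
    -- the graph point
    set x : E := Ψ (γfun w t) with hxdef
    have hxform : x = γfun w t + (fh e f (γfun w t) - (inner ℝ (γfun w t) e : ℝ)) • e := rfl
    have hDx : HasFDerivAt (fh e f) D x := by
      rw [hxform]
      exact fh_hasFDerivAt_translate he hD _
    have hFx : (inner ℝ x e : ℝ) = fh e f x := by
      rw [hxform, fh_translate he, inner_add_left, real_inner_smul_left, inner_e_self he]
      ring
    have hxball : x ∈ ball p r := by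
      have habs : |t - b| < ρ := by
        rw [abs_of_nonneg (by linarith [htI.1])]
        linarith [htI.2, ht₂b]
      exact (hρprop w t (by linarith [hwρ]) habs).2
    have hkey := frontier_normal_ineq hyp he hr hflip hgraph hxball hFx hDx
    -- rewrite the key inequality
    have hDe : D e = 0 := fh_fderiv_e he hD
    have hfhx : fh e f x = fh e f (γfun w t) := by rw [hxform, fh_translate he]
    have hxsub : x - x₀ = t • (v + w) + (fh e f (γfun w t) - (inner ℝ (γfun w t) e : ℝ)) • e := by
      rw [hxform, hγdef]; simp only; module
    have hkey2 : 0 ≤ fh e f (γfun w t) - (inner ℝ x₀ e : ℝ) - t * D (v + w) := by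
      have h6 : (inner ℝ (x - x₀) e : ℝ) = fh e f (γfun w t) - (inner ℝ x₀ e : ℝ) := by
        have : (inner ℝ (x - x₀) e : ℝ) = (inner ℝ x e : ℝ) - (inner ℝ x₀ e : ℝ) := by
          rw [inner_sub_left]
        rw [this, hFx, hfhx]
      have h7 : D (x - x₀) = t * D (v + w) := by
        rw [hxsub]
        rw [map_add, _root_.map_smul, _root_.map_smul, hDe]
        simp
      rw [h6, h7] at hkey
      exact hkey
    -- derivative of u
    have hline : HasDerivAt (fun τ : ℝ => γfun w τ) (v + w) t := by
      rw [hγdef]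
      simpa using ((hasDerivAt_id t).smul_const (v + w)).const_add x₀
    have hFinner : HasFDerivAt (fun y : E => (inner ℝ y e : ℝ)) (innerSL ℝ e) (γfun w t) := by
      have heq : (fun y : E => (inner ℝ y e : ℝ)) = fun y => innerSL ℝ e y :=
        funext fun y => by rw [innerSL_apply_apply, real_inner_comm]
      rw [heq]
      exact (innerSL ℝ e).hasFDerivAt
    have hFD : HasFDerivAt F (innerSL ℝ e - D) (γfun w t) := hFinner.sub hD
    have hu' : HasDerivAt u ((inner ℝ e (v + w) : ℝ) - D (v + w)) t := by
      have := hFD.comp_hasDerivAt t hline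
      have h2 : HasDerivAt u ((innerSL ℝ e - D) (v + w)) t := this
      simpa [innerSL_apply_apply] using h2
    -- derivative of ψ
    have hid : HasDerivAt (fun τ : ℝ => τ) 1 t := hasDerivAt_id t
    have hψ' : HasDerivAt ψ ((((inner ℝ e (v + w) : ℝ) - D (v + w)) * t - u t * 1) / t ^ 2) t := by
      rw [hψdef]
      exact hu'.div hid (ne_of_gt htpos)
    refine ⟨_, ?_, hψ'⟩
    -- numerator nonneg
    have hnum : ((inner ℝ e (v + w) : ℝ) - D (v + w)) * t - u t * 1
        = fh e f (γfun w t) - (inner ℝ x₀ e : ℝ) - t * D (v + w) := by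
      rw [hudef, hFdef]
      simp only
      have h8 : (inner ℝ (γfun w t) e : ℝ) = (inner ℝ x₀ e : ℝ) + t * (inner ℝ e (v + w) : ℝ) := by
        rw [hγdef]
        simp only
        rw [inner_add_left, real_inner_smul_left, real_inner_comm]
        rw [real_inner_comm (v + w) e]
      rw [h8]
      ring
    rw [hnum]
    exact div_nonneg hkey2 (by positivity)
  -- monotonicity
  have hmono : ψ b ≤ ψ t₂ := hψlip.le_of_ae_deriv_nonneg (le_of_lt hbt₂) hψderiv
  -- comparison with the unperturbed ray
  have hγwb : γfun w b - γfun 0 b = b • w := by rw [hγdef]; simp only; module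
  have hγwt₂ : γfun w t₂ - γfun 0 t₂ = t₂ • w := by rw [hγdef]; simp only; module
  have hub : |u b| ≤ (1 + L) * (b * ‖w‖) := by
    have h1 := hFlip (γfun w b) (γfun 0 b)
    rw [hγwb] at h1
    have h2 : F (γfun 0 b) = 0 := by rw [hγ0b, hFp]
    rw [h2] at h1
    have h3 : ‖b • w‖ = b * ‖w‖ := by
      rw [norm_smul, Real.norm_eq_abs, abs_of_pos hbpos]
    rw [hudef]
    simpa [h3] using h1
  have hut₂ : u t₂ ≤ -η + (1 + L) * (t₂ * ‖w‖) := by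
    have h1 := hFlip (γfun w t₂) (γfun 0 t₂)
    rw [hγwt₂] at h1
    have h3 : ‖t₂ • w‖ = t₂ * ‖w‖ := by
      rw [norm_smul, Real.norm_eq_abs, abs_of_pos ht₂pos]
    rw [h3] at h1
    have h4 := (abs_le.1 h1).2
    have h5 : F (γfun 0 t₂) = -η := by rw [hηdef]; ring
    rw [hudef]
    simp only
    linarith [h4, h5.le, h5.ge]
  -- contradiction
  have hmono' : u b * t₂ ≤ u t₂ * b := by
    rw [hψdef] at hmono
    simp only at hmono
    rwa [div_le_div_iff₀ hbpos ht₂pos] at hmono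
  have hB : -((1 + L) * (b * ‖w‖)) ≤ u b := (abs_le.1 hub).1
  have hwη' : (2 * (1 + L) * t₂ + 1) * ‖w‖ < η := by
    have hX : 0 < 2 * (1 + L) * t₂ + 1 := by positivity
    rw [lt_div_iff₀ hX] at hwη
    linarith [hwη]
  nlinarith [hmono', mul_le_mul_of_nonneg_right hB ht₂pos.le,
    mul_le_mul_of_nonneg_right hut₂ hbpos.le,
    mul_lt_mul_of_pos_right hwη' hbpos, norm_nonneg w,
    mul_nonneg (norm_nonneg w) hbpos.le, hη, ht₂pos, hbpos]

set_option maxHeartbeats 1000000 in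
lemma forward_direction {Ω : Set (EuclideanSpace ℝ (Fin d))}
    (hΩopen : IsOpen Ω) {x₀ : E} (hx₀ : x₀ ∈ Ω) (hstar : StarShapedWrt Ω x₀) :
    ∀ x ∈ frontier Ω, ∀ ν, IsOutwardNormalAt Ω x ν → 0 ≤ (inner ℝ (x - x₀) ν : ℝ) := by
  intro x hxf ν hν
  obtain ⟨hν1, hνprop⟩ := hν
  rw [hΩopen.frontier_eq, Set.mem_diff] at hxf
  obtain ⟨hxcl, hxΩ⟩ := hxf
  by_contra hneg
  push_neg at hneg
  set c : ℝ := inner ℝ (x - x₀) ν with hcdef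
  set ρ : ℝ := ‖x - x₀‖ with hρdef
  have hc : c < 0 := hneg
  have hρ0 : 0 ≤ ρ := norm_nonneg _
  set ε : ℝ := min 1 (-c / (2 * (ρ + 2))) with hεdef
  have hε : 0 < ε := by
    apply lt_min one_pos
    have : 0 < -c := by linarith
    positivity
  have hε1 : ε ≤ 1 := min_le_left _ _
  have hε2 : ε * (ρ + 2) ≤ -c / 2 := by
    have h1 : ε ≤ -c / (2 * (ρ + 2)) := min_le_right _ _
    have h2 : 0 < ρ + 2 := by linarith
    have h1' : ε * (2 * (ρ + 2)) ≤ -c := (le_div_iff₀ (by positivity)).1 h1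
    linarith
  obtain ⟨δ, hδ, hin, hout⟩ := hνprop ε hε
  set τ : ℝ := min (1/2) (δ / (2 * (ρ + 1))) with hτdef
  have hτpos : 0 < τ := lt_min (by norm_num) (by positivity)
  have hτ1 : τ ≤ 1 := le_trans (min_le_left _ _) (by norm_num)
  have hτρ : τ * ρ < δ / 2 := by
    have h1 : τ ≤ δ / (2 * (ρ + 1)) := min_le_right _ _
    have h2 : 0 < ρ + 1 := by linarith
    have h3 : τ * ρ ≤ δ / (2 * (ρ + 1)) * ρ := mul_le_mul_of_nonneg_right h1 hρ0
    have h4 : δ / (2 * (ρ + 1)) * ρ < δ / 2 := by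
      rw [div_mul_eq_mul_div, div_lt_div_iff₀ (by positivity) (by norm_num)]
      nlinarith
    linarith
  have hmin : 0 < min (δ / 2) (ε * τ) := lt_min (by linarith) (by positivity)
  obtain ⟨zz, hzz, hdistz⟩ := Metric.mem_closure_iff.1 hxcl _ hmin
  have hzx : ‖zz - x‖ < min (δ / 2) (ε * τ) := by
    rwa [dist_eq_norm, norm_sub_rev] at hdistz
  have hzx1 : ‖zz - x‖ < δ / 2 := lt_of_lt_of_le hzx (min_le_left _ _)
  have hzx2 : ‖zz - x‖ < ε * τ := lt_of_lt_of_le hzx (min_le_right _ _)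
  set y : E := x₀ + (1 - τ) • (zz - x₀) with hydef
  have hyseg : y ∈ segment ℝ x₀ zz := by
    refine ⟨τ, 1 - τ, hτpos.le, by linarith, by ring, ?_⟩
    rw [hydef]; module
  have hyΩ : y ∈ Ω := hstar zz hzz hyseg
  have hyx : y - x = (1 - τ) • (zz - x) - τ • (x - x₀) := by
    rw [hydef]; module
  have hynorm : ‖y - x‖ ≤ ‖zz - x‖ + τ * ρ := by
    rw [hyx]
    calc ‖(1 - τ) • (zz - x) - τ • (x - x₀)‖
        ≤ ‖(1 - τ) • (zz - x)‖ + ‖τ • (x - x₀)‖ := norm_sub_le _ _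
      _ = (1 - τ) * ‖zz - x‖ + τ * ρ := by
          rw [norm_smul, norm_smul, Real.norm_eq_abs, Real.norm_eq_abs,
            abs_of_nonneg (by linarith), abs_of_pos hτpos, hρdef]
      _ ≤ ‖zz - x‖ + τ * ρ := by
          have := norm_nonneg (zz - x)
          nlinarith
  have hlt : ‖y - x‖ < δ := by
    calc ‖y - x‖ ≤ ‖zz - x‖ + τ * ρ := hynorm
      _ < δ / 2 + δ / 2 := by linarith
      _ = δ := by ring
  have happ := hin y hyΩ hlt
  have hexpand : (inner ℝ ν (y - x) : ℝ)
      = (1 - τ) * (inner ℝ ν (zz - x) : ℝ) - τ * (inner ℝ ν (x - x₀) : ℝ) := by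
    rw [hyx, inner_sub_right, real_inner_smul_right, real_inner_smul_right]
  have hcc : (inner ℝ ν (x - x₀) : ℝ) = c := by rw [hcdef, real_inner_comm]
  have hI : |(inner ℝ ν (zz - x) : ℝ)| ≤ ‖zz - x‖ := by
    calc |(inner ℝ ν (zz - x) : ℝ)| ≤ ‖ν‖ * ‖zz - x‖ := abs_real_inner_le_norm _ _
      _ = ‖zz - x‖ := by rw [hν1, one_mul]
  rw [hexpand, hcc] at happ
  -- derive contradiction
  have hIl := (abs_le.1 hI).1
  have h5 : -(τ * c) ≤ ε * (‖zz - x‖ + τ * ρ) + ‖zz - x‖ := by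
    have h6 : ε * ‖y - x‖ ≤ ε * (‖zz - x‖ + τ * ρ) :=
      mul_le_mul_of_nonneg_left hynorm hε.le
    have h7 : (1 - τ) * (inner ℝ ν (zz - x) : ℝ) ≥ -((1 - τ) * ‖zz - x‖) := by
      have := mul_le_mul_of_nonneg_left hIl (by linarith : (0:ℝ) ≤ 1 - τ)
      nlinarith [abs_nonneg (inner ℝ ν (zz - x) : ℝ), hI]
    nlinarith [norm_nonneg (zz - x)]
  have h8 : -(τ * c) ≤ ε * τ * (ε + ρ + 1) := by
    have h9 : ‖zz - x‖ ≤ ε * τ := hzx2.le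
    nlinarith [norm_nonneg (zz - x), hε, hτpos]
  have h10 : -c ≤ ε * (ε + ρ + 1) := by
    have := h8
    nlinarith [hτpos]
  have h11 : ε * (ε + ρ + 1) ≤ ε * (ρ + 2) :=
    mul_le_mul_of_nonneg_left (by linarith) hε.le
  linarith


/-- Characterisation of star-shapedness for Lipschitz domains (Lemma 2.1(i)):
a bounded Lipschitz open set `Ω` is star-shaped with respect to `x₀ ∈ Ω` if and
only if `(x − x₀)·n(x) ≥ 0` at every boundary point where the outward unit
normal is defined. -/
theorem stmt3 (Ω : Set (EuclideanSpace ℝ (Fin d))) (hd : 2 ≤ d)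
    (hΩopen : IsOpen Ω) (hΩbdd : Bornology.IsBounded Ω)
    (hΩlip : HasLipschitzBoundary Ω)
    (x₀ : EuclideanSpace ℝ (Fin d)) (hx₀ : x₀ ∈ Ω) :
    StarShapedWrt Ω x₀ ↔
      ∀ x ∈ frontier Ω, ∀ ν, IsOutwardNormalAt Ω x ν →
        0 ≤ (inner ℝ (x - x₀) ν : ℝ) := by
  constructor
  · intro hstar
    exact forward_direction hΩopen hx₀ hstar
  · intro h
    exact converse_direction hΩopen x₀ hx₀ (fun x hx => hΩlip x hx) h

end
end
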